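/- Under the same assumptions, with additionally K_f ≥ 1 and R_Θ ≥ 1, let H and H̃ solve the ODE with parameters θ and θ̃ respectively (both in the class with ‖·‖_{1,∞} ≤ R_Θ) and the same initial condition x ∈ B(0,R_X). Then ‖H_1 − H̃_1‖ ≤ 2 M K_f R_Θ exp(2 K_f R_Θ) · ‖θ − θ̃‖_{1,∞}. -/

import Mathlib

open Set Real

set_option maxHeartbeats 1000000 in
theorem stmt2 {d m : ℕ} (Kf M RX RΘ : ℝ) (hKf : 1 ≤ Kf) (hRΘ : 1 ≤ RΘ)
    (f : Fin m → EuclideanSpace ℝ (Fin d) → EuclideanSpace ℝ (Fin d))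
    (hf : ∀ i, ∀ a b, ‖f i a - f i b‖ ≤ Kf * ‖a - b‖)
    (hM : ∀ i, ∀ y : EuclideanSpace ℝ (Fin d), ‖y‖ ≤ RX → ‖f i y‖ ≤ M)
    (θ θ' : ℝ → Fin m → ℝ)
    (hθb : ∀ t ∈ Set.Icc (0:ℝ) 1, ∑ i, |θ t i| ≤ RΘ)
    (hθ'b : ∀ t ∈ Set.Icc (0:ℝ) 1, ∑ i, |θ' t i| ≤ RΘ)
    (H H' : ℝ → EuclideanSpace ℝ (Fin d))
    (hsol : ∀ t ∈ Set.Icc (0:ℝ) 1,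
      HasDerivWithinAt H (∑ i, θ t i • f i (H t)) (Set.Icc (0:ℝ) 1) t)
    (hsol' : ∀ t ∈ Set.Icc (0:ℝ) 1,
      HasDerivWithinAt H' (∑ i, θ' t i • f i (H' t)) (Set.Icc (0:ℝ) 1) t)
    (hinit : H 0 = H' 0) (hx : ‖H 0‖ ≤ RX) :
    ‖H 1 - H' 1‖ ≤ 2 * M * Kf * RΘ * Real.exp (2 * Kf * RΘ) *
      (⨆ t : Set.Icc (0:ℝ) 1, ∑ i, |θ (t : ℝ) i - θ' (t : ℝ) i|) := by
  have h01 : (0:ℝ) ∈ Icc (0:ℝ) 1 := by norm_num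
  have h11 : (1:ℝ) ∈ Icc (0:ℝ) 1 := by norm_num
  have hKf0 : (0:ℝ) < Kf := lt_of_lt_of_le one_pos hKf
  have hRΘ0 : (0:ℝ) < RΘ := lt_of_lt_of_le one_pos hRΘ
  set K' : ℝ := Kf * RΘ with hK'
  have hK'0 : (0:ℝ) < K' := mul_pos hKf0 hRΘ0
  have hK'1 : (1:ℝ) ≤ K' := by nlinarith
  -- continuity of solutions
  have hcont : ContinuousOn H (Icc 0 1) := fun t ht => (hsol t ht).continuousWithinAt
  have hcont' : ContinuousOn H' (Icc 0 1) := fun t ht => (hsol' t ht).continuousWithinAt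
  have hIci : ∀ t ∈ Ico (0:ℝ) 1, HasDerivWithinAt H (∑ i, θ t i • f i (H t)) (Ici t) t :=
    fun t ht => (hsol t (Ico_subset_Icc_self ht)).mono_of_mem_nhdsWithin
      (Icc_mem_nhdsGE_of_mem ht)
  have hIci' : ∀ t ∈ Ico (0:ℝ) 1, HasDerivWithinAt H' (∑ i, θ' t i • f i (H' t)) (Ici t) t :=
    fun t ht => (hsol' t (Ico_subset_Icc_self ht)).mono_of_mem_nhdsWithin
      (Icc_mem_nhdsGE_of_mem ht)
  -- the sup is nonnegative and dominates each sum
  have hbdd : BddAbove (Set.range fun t : Set.Icc (0:ℝ) 1 => ∑ i, |θ (t:ℝ) i - θ' (t:ℝ) i|) := by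
    refine ⟨2 * RΘ, ?_⟩
    rintro x ⟨⟨t, ht⟩, rfl⟩
    calc ∑ i, |θ t i - θ' t i| ≤ ∑ i, (|θ t i| + |θ' t i|) :=
          Finset.sum_le_sum fun i _ => abs_sub _ _
      _ = (∑ i, |θ t i|) + ∑ i, |θ' t i| := Finset.sum_add_distrib
      _ ≤ RΘ + RΘ := add_le_add (hθb t ht) (hθ'b t ht)
      _ = 2 * RΘ := by ring
  set δs : ℝ := ⨆ t : Set.Icc (0:ℝ) 1, ∑ i, |θ (t:ℝ) i - θ' (t:ℝ) i| with hδs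
  have hδle : ∀ t ∈ Icc (0:ℝ) 1, ∑ i, |θ t i - θ' t i| ≤ δs := fun t ht =>
    le_ciSup hbdd (⟨t, ht⟩ : Set.Icc (0:ℝ) 1)
  have hδ0 : 0 ≤ δs :=
    le_trans (Finset.sum_nonneg fun i _ => abs_nonneg _) (hδle 0 h01)
  rcases Nat.eq_zero_or_pos m with hm | hm
  · -- m = 0 : both solutions are constant, and δs = 0
    subst hm
    have hzero : ∀ t ∈ Icc (0:ℝ) 1, ‖H t - H' t‖ ≤ gronwallBound 0 0 0 (t - 0) := by
      refine norm_le_gronwallBound_of_norm_deriv_right_le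
        (f' := fun _ => (0 : EuclideanSpace ℝ (Fin d)))
        (hcont.sub hcont') (fun t ht => ?_) (by simp [hinit]) (fun t ht => by simp)
      convert (hIci t ht).sub (hIci' t ht) using 1
      · rfl
      · simp
    have h1 := hzero 1 h11
    simp [gronwallBound_K0] at h1
    have hδ0' : δs = 0 := by
      refine le_antisymm ?_ hδ0
      exact ciSup_le fun t => by simp
    rw [hδ0', mul_zero]
    simp [h1]
  -- m ≥ 1 : M ≥ 0
  obtain ⟨i₀⟩ : Nonempty (Fin m) := ⟨⟨0, hm⟩⟩
  have hM0 : 0 ≤ M := le_trans (norm_nonneg _) (hM i₀ (H 0) hx)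
  have hx' : ‖H' 0‖ ≤ RX := hinit ▸ hx
  -- pointwise bound on f i (H' t) via Grönwall on ‖H' t - H' 0‖
  have hflin : ∀ i, ∀ t, ‖f i (H' t)‖ ≤ M + Kf * ‖H' t - H' 0‖ := by
    intro i t
    calc ‖f i (H' t)‖ = ‖f i (H' 0) + (f i (H' t) - f i (H' 0))‖ := by
          congr 1; abel
      _ ≤ ‖f i (H' 0)‖ + ‖f i (H' t) - f i (H' 0)‖ := norm_add_le _ _
      _ ≤ M + Kf * ‖H' t - H' 0‖ := add_le_add (hM i _ hx') (hf i _ _)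
  have hB : ∀ t ∈ Icc (0:ℝ) 1, ‖H' t - H' 0‖ ≤ gronwallBound 0 K' (RΘ * M) (t - 0) := by
    refine norm_le_gronwallBound_of_norm_deriv_right_le
      (hcont'.sub continuousOn_const) (fun t ht => (hIci' t ht).sub_const _)
      (by simp) (fun t ht => ?_)
    calc ‖∑ i, θ' t i • f i (H' t)‖ ≤ ∑ i, ‖θ' t i • f i (H' t)‖ := norm_sum_le _ _
      _ = ∑ i, |θ' t i| * ‖f i (H' t)‖ := by simp [norm_smul]
      _ ≤ ∑ i, |θ' t i| * (M + Kf * ‖H' t - H' 0‖) :=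
          Finset.sum_le_sum fun i _ => mul_le_mul_of_nonneg_left (hflin i t) (abs_nonneg _)
      _ = (∑ i, |θ' t i|) * (M + Kf * ‖H' t - H' 0‖) := by rw [Finset.sum_mul]
      _ ≤ RΘ * (M + Kf * ‖H' t - H' 0‖) := by
          refine mul_le_mul_of_nonneg_right (hθ'b t (Ico_subset_Icc_self ht)) ?_
          positivity
      _ = K' * ‖(fun t => H' t - H' 0) t‖ + RΘ * M := by simp only [hK']; ring
  have hfb : ∀ t ∈ Icc (0:ℝ) 1, ∀ i, ‖f i (H' t)‖ ≤ M * Real.exp K' := by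
    intro t ht i
    have hB' := hB t ht
    rw [gronwallBound_of_K_ne_0 (ne_of_gt hK'0)] at hB'
    have hdiv : RΘ * M / K' = M / Kf := by
      rw [hK']; field_simp
    rw [hdiv] at hB'
    have h1 : ‖f i (H' t)‖ ≤ M + Kf * (M / Kf * (Real.exp (K' * (t - 0)) - 1)) :=
      le_trans (hflin i t) (by
        refine add_le_add (le_refl M) (mul_le_mul_of_nonneg_left ?_ hKf0.le)
        linarith [hB'])
    have hKfM : Kf * (M / Kf * (Real.exp (K' * (t - 0)) - 1)) =
        M * (Real.exp (K' * (t - 0)) - 1) := by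
      field_simp
    rw [hKfM] at h1
    have hexp : Real.exp (K' * (t - 0)) ≤ Real.exp K' := by
      apply Real.exp_le_exp.2
      have := ht.2
      nlinarith [ht.1]
    nlinarith [h1, hexp, hM0]
  -- main Grönwall estimate on g = H - H'
  set ε : ℝ := δs * (M * Real.exp K') with hε
  have hε0 : 0 ≤ ε := by positivity
  have hmain : ∀ t ∈ Icc (0:ℝ) 1, ‖H t - H' t‖ ≤ gronwallBound 0 K' ε (t - 0) := by
    refine norm_le_gronwallBound_of_norm_deriv_right_le (hcont.sub hcont')
      (fun t ht => (hIci t ht).sub (hIci' t ht)) (by simp [hinit]) (fun t ht => ?_)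
    have htI := Ico_subset_Icc_self ht
    have hsplit : (∑ i, θ t i • f i (H t)) - (∑ i, θ' t i • f i (H' t)) =
        (∑ i, θ t i • (f i (H t) - f i (H' t))) + ∑ i, (θ t i - θ' t i) • f i (H' t) := by
      rw [← Finset.sum_add_distrib, ← Finset.sum_sub_distrib]
      refine Finset.sum_congr rfl fun i _ => ?_
      rw [smul_sub, sub_smul]; abel
    rw [hsplit]
    have hA : ‖∑ i, θ t i • (f i (H t) - f i (H' t))‖ ≤ K' * ‖H t - H' t‖ := by
      calc ‖∑ i, θ t i • (f i (H t) - f i (H' t))‖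
          ≤ ∑ i, ‖θ t i • (f i (H t) - f i (H' t))‖ := norm_sum_le _ _
        _ = ∑ i, |θ t i| * ‖f i (H t) - f i (H' t)‖ := by simp [norm_smul]
        _ ≤ ∑ i, |θ t i| * (Kf * ‖H t - H' t‖) :=
            Finset.sum_le_sum fun i _ =>
              mul_le_mul_of_nonneg_left (hf i _ _) (abs_nonneg _)
        _ = (∑ i, |θ t i|) * (Kf * ‖H t - H' t‖) := by rw [Finset.sum_mul]
        _ ≤ RΘ * (Kf * ‖H t - H' t‖) := by
            refine mul_le_mul_of_nonneg_right (hθb t htI) (by positivity)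
        _ = K' * ‖H t - H' t‖ := by rw [hK']; ring
    have hC : ‖∑ i, (θ t i - θ' t i) • f i (H' t)‖ ≤ ε := by
      calc ‖∑ i, (θ t i - θ' t i) • f i (H' t)‖
          ≤ ∑ i, ‖(θ t i - θ' t i) • f i (H' t)‖ := norm_sum_le _ _
        _ = ∑ i, |θ t i - θ' t i| * ‖f i (H' t)‖ := by simp [norm_smul]
        _ ≤ ∑ i, |θ t i - θ' t i| * (M * Real.exp K') :=
            Finset.sum_le_sum fun i _ =>
              mul_le_mul_of_nonneg_left (hfb t htI i) (abs_nonneg _)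
        _ = (∑ i, |θ t i - θ' t i|) * (M * Real.exp K') := by rw [Finset.sum_mul]
        _ ≤ δs * (M * Real.exp K') :=
            mul_le_mul_of_nonneg_right (hδle t htI) (by positivity)
    calc ‖(∑ i, θ t i • (f i (H t) - f i (H' t))) + ∑ i, (θ t i - θ' t i) • f i (H' t)‖
        ≤ ‖∑ i, θ t i • (f i (H t) - f i (H' t))‖ + ‖∑ i, (θ t i - θ' t i) • f i (H' t)‖ :=
          norm_add_le _ _
      _ ≤ K' * ‖(fun t => H t - H' t) t‖ + ε := add_le_add hA hC
  have h1 := hmain 1 h11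
  rw [gronwallBound_of_K_ne_0 (ne_of_gt hK'0)] at h1
  simp only [zero_mul, zero_add, sub_zero, mul_one] at h1
  -- final arithmetic
  have hexpK : Real.exp K' - 1 ≤ K' * Real.exp K' := by
    have hEI : Real.exp K' * Real.exp (-K') = 1 := by
      rw [← Real.exp_add]; simp
    nlinarith [Real.add_one_le_exp (-K'), hEI, Real.exp_pos K', Real.exp_pos (-K')]
  have hstep : ε / K' * (Real.exp K' - 1) ≤ ε * Real.exp K' := by
    rw [div_mul_eq_mul_div, div_le_iff₀ hK'0]
    calc ε * (Real.exp K' - 1) ≤ ε * (K' * Real.exp K') :=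
          mul_le_mul_of_nonneg_left hexpK hε0
      _ = ε * Real.exp K' * K' := by ring
  have hδM : δs * M ≤ 2 * M * Kf * RΘ * δs := by
    have h0 : 0 ≤ δs * M * (2 * Kf * RΘ - 1) :=
      mul_nonneg (mul_nonneg hδ0 hM0) (by nlinarith)
    nlinarith [h0]
  have hfinal : ε * Real.exp K' ≤ 2 * M * Kf * RΘ * Real.exp (2 * Kf * RΘ) * δs := by
    have heq : ε * Real.exp K' = δs * M * Real.exp (2 * Kf * RΘ) := by
      rw [hε, hK', show (2:ℝ) * Kf * RΘ = Kf * RΘ + Kf * RΘ by ring, Real.exp_add]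
      ring
    rw [heq, show 2 * M * Kf * RΘ * Real.exp (2 * Kf * RΘ) * δs
        = (2 * M * Kf * RΘ * δs) * Real.exp (2 * Kf * RΘ) by ring]
    exact mul_le_mul_of_nonneg_right hδM (Real.exp_pos _).le
  linarith [h1, hstep, hfinal]
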